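/- arXiv:2403.10265 — 4 statements merged into one kernel-verified Lean document; each statement's English description precedes it below -/
import Mathlib

section
/- Let G be a group and u, v, r, s elements of G satisfying the two thin dumbbell relations s*u*v = u*v*r and v*u*s = r*v*u, together with the symmetric hexagon relation u*s*u = v*r*v. Then the rank-4 braid relation holds between s and u^2, i.e. s*u^2*s*u^2 = u^2*s*u^2*s. -/
theorem thin_dumbbell_sym_hex_give_br4 {G : Type*} [Group G] (u v r s : G)
    (h1 : s * u * v = u * v * r) (h2 : v * u * s = r * v * u)
    (h3 : u * s * u = v * r * v) :
    s * u ^ 2 * s * u ^ 2 = u ^ 2 * s * u ^ 2 * s := by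
  calc s * u ^ 2 * s * u ^ 2 = s * u * (u * s * u) * u := by
        simp [pow_two, mul_assoc]
    _ = s * u * (v * r * v) * u := by rw [h3]
    _ = (s * u * v) * (r * (v * u)) := by simp [mul_assoc]
    _ = (u * v * r) * (r * (v * u)) := by rw [h1]
    _ = u * v * r * (v * u * s) := by rw [h2]; simp [mul_assoc]
    _ = u * (v * r * v) * (u * s) := by simp [mul_assoc]
    _ = u * (u * s * u) * (u * s) := by rw [h3]
    _ = u ^ 2 * s * u ^ 2 * s := by simp [pow_two, mul_assoc]
end

section
/- Let G be a group and u, v, r, s elements of G satisfying u*s*u = v*r*v and v*u*s = r*v*u. Then s*u^2*s^{-1} = u^{-1}*v^2*u. -/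
theorem conj_two_cycle {G : Type*} [Group G] (u v r s : G)
    (h1 : u * s * u = v * r * v) (h2 : v * u * s = r * v * u) :
    s * u ^ 2 * s⁻¹ = u⁻¹ * v ^ 2 * u := by
  have hr : r = v * u * s * u⁻¹ * v⁻¹ := by
    have h : r * (v * u) = (v * u * s * u⁻¹ * v⁻¹) * (v * u) := by
      rw [← mul_assoc r v u, ← h2]; group
    exact mul_right_cancel h
  have key : u * s * u = v * v * (u * s * u⁻¹) := by
    rw [h1, hr]; group
  have h3 : v * v = u * s * (u * u) * s⁻¹ * u⁻¹ := by
    have h : u * s * u * (u * s * u⁻¹)⁻¹ = v * v := by rw [key]; group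
    rw [← h]; group
  rw [pow_two, pow_two, h3]; group
end

section
/- Let G be a group and u, v, r, s elements of G satisfying s*u*v = u*v*r and u*s*u = v*r*v. Then s*u*v^2 = u^2*s*u, and consequently v^{-1}*u^2*v = r*v^2*r^{-1}. -/
theorem lozenge_conj {G : Type*} [Group G] (u v r s : G)
    (h1 : s * u * v = u * v * r) (h2 : u * s * u = v * r * v) :
    s * u * v ^ 2 = u ^ 2 * s * u ∧ v⁻¹ * u ^ 2 * v = r * v ^ 2 * r⁻¹ := by
  have h3 : s * u * v ^ 2 = u ^ 2 * s * u := by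
    calc s * u * v ^ 2 = (s * u * v) * v := by rw [pow_two]; group
    _ = u * (v * r * v) := by rw [h1]; group
    _ = u * (u * s * u) := by rw [h2]
    _ = u ^ 2 * s * u := by rw [pow_two]; group
  refine ⟨h3, ?_⟩
  -- from h3 and h1: u^2 * (u*v*r) = u*v*r*v^2
  have h4 : u ^ 2 * (u * v * r) = u * v * r * v ^ 2 := by
    have := congrArg (· * v) h3
    calc u ^ 2 * (u * v * r) = u ^ 2 * (s * u * v) := by rw [h1]
    _ = u ^ 2 * s * u * v := by group
    _ = s * u * v ^ 2 * v := by rw [h3]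
    _ = (s * u * v) * v ^ 2 := by group
    _ = u * v * r * v ^ 2 := by rw [h1]
  -- rearrange h4
  have h5 : u ^ 2 = v * (r * v ^ 2 * r⁻¹) * v⁻¹ := by
    have := congrArg (fun x => u⁻¹ * x * r⁻¹) h4
    calc u ^ 2 = u⁻¹ * (u ^ 2 * (u * v * r)) * r⁻¹ * v⁻¹ * u * u⁻¹ * v⁻¹ * v := by group
    _ = u⁻¹ * (u * v * r * v ^ 2) * r⁻¹ * v⁻¹ * u * u⁻¹ * v⁻¹ * v := by rw [h4]
    _ = v * (r * v ^ 2 * r⁻¹) * v⁻¹ := by group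
  rw [h5]; group
end

section
/- Let G be a group and ζ, η, x ∈ G such that the rank-4 braid relation ζ*η*ζ*η = η*ζ*η*ζ holds, ζ commutes with x, and the braid relation η*x*η = x*η*x holds. Then the braid relation holds between a := ζ*η*ζ^{-1} and x' := η^{-1}*x*η, i.e. a*x'*a = x'*a*x'. -/
theorem braid_of_conj' {G : Type*} [Group G] (ζ η x : G)
    (hbr4 : ζ * η * ζ * η = η * ζ * η * ζ)
    (hco : ζ * x = x * ζ) (hbr : η * x * η = x * η * x) :
    (ζ * η * ζ⁻¹) * (η⁻¹ * x * η) * (ζ * η * ζ⁻¹)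
      = (η⁻¹ * x * η) * (ζ * η * ζ⁻¹) * (η⁻¹ * x * η) := by
  have s0 : ζ * η * ζ⁻¹ * η⁻¹ * x * η * ζ * η * ζ⁻¹ = η⁻¹ * ζ⁻¹ * η * ζ * x * η * ζ * η * ζ⁻¹ := by
    rw [show ζ * η * ζ⁻¹ * η⁻¹ * x * η * ζ * η * ζ⁻¹ = η⁻¹ * ζ⁻¹ * (ζ * η * ζ * η) * (η * ζ * η * ζ)⁻¹ * (η⁻¹ * ζ⁻¹)⁻¹ * (η⁻¹ * ζ⁻¹ * η * ζ * x * η * ζ * η * ζ⁻¹) from by group, hbr4]; group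
  have s1 : η⁻¹ * ζ⁻¹ * η * ζ * x * η * ζ * η * ζ⁻¹ = η⁻¹ * ζ⁻¹ * x * η * x * η⁻¹ * x⁻¹ * ζ * x * η * ζ * η * ζ⁻¹ := by
    rw [show η⁻¹ * ζ⁻¹ * η * ζ * x * η * ζ * η * ζ⁻¹ = η⁻¹ * ζ⁻¹ * (η * x * η) * (x * η * x)⁻¹ * (η⁻¹ * ζ⁻¹)⁻¹ * (η⁻¹ * ζ⁻¹ * x * η * x * η⁻¹ * x⁻¹ * ζ * x * η * ζ * η * ζ⁻¹) from by group, hbr]; group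
  have s2 : η⁻¹ * ζ⁻¹ * x * η * x * η⁻¹ * x⁻¹ * ζ * x * η * ζ * η * ζ⁻¹ = η⁻¹ * x * ζ⁻¹ * η * x * η⁻¹ * x⁻¹ * ζ * x * η * ζ * η * ζ⁻¹ := by
    rw [show η⁻¹ * ζ⁻¹ * x * η * x * η⁻¹ * x⁻¹ * ζ * x * η * ζ * η * ζ⁻¹ = η⁻¹ * ζ⁻¹ * (x * ζ) * (ζ * x)⁻¹ * (η⁻¹ * ζ⁻¹)⁻¹ * (η⁻¹ * x * ζ⁻¹ * η * x * η⁻¹ * x⁻¹ * ζ * x * η * ζ * η * ζ⁻¹) from by group, ← hco]; group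
  have s3 : η⁻¹ * x * ζ⁻¹ * η * x * η⁻¹ * x⁻¹ * ζ * x * η * ζ * η * ζ⁻¹ = η⁻¹ * x * ζ⁻¹ * η * ζ * x * ζ⁻¹ * η⁻¹ * x⁻¹ * ζ * x * η * ζ * η * ζ⁻¹ := by
    rw [show η⁻¹ * x * ζ⁻¹ * η * x * η⁻¹ * x⁻¹ * ζ * x * η * ζ * η * ζ⁻¹ = η⁻¹ * x * ζ⁻¹ * η * (x * ζ) * (ζ * x)⁻¹ * (η⁻¹ * x * ζ⁻¹ * η)⁻¹ * (η⁻¹ * x * ζ⁻¹ * η * ζ * x * ζ⁻¹ * η⁻¹ * x⁻¹ * ζ * x * η * ζ * η * ζ⁻¹) from by group, ← hco]; group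
  have s4 : η⁻¹ * x * ζ⁻¹ * η * ζ * x * ζ⁻¹ * η⁻¹ * x⁻¹ * ζ * x * η * ζ * η * ζ⁻¹ = η⁻¹ * x * ζ⁻¹ * η * ζ * x * ζ⁻¹ * η⁻¹ * ζ * η * ζ * η * ζ⁻¹ := by
    rw [show η⁻¹ * x * ζ⁻¹ * η * ζ * x * ζ⁻¹ * η⁻¹ * x⁻¹ * ζ * x * η * ζ * η * ζ⁻¹ = η⁻¹ * x * ζ⁻¹ * η * ζ * x * ζ⁻¹ * η⁻¹ * x⁻¹ * (ζ * x) * (x * ζ)⁻¹ * (η⁻¹ * x * ζ⁻¹ * η * ζ * x * ζ⁻¹ * η⁻¹ * x⁻¹)⁻¹ * (η⁻¹ * x * ζ⁻¹ * η * ζ * x * ζ⁻¹ * η⁻¹ * ζ * η * ζ * η * ζ⁻¹) from by group, hco]; group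
  have s5 : η⁻¹ * x * ζ⁻¹ * η * ζ * x * ζ⁻¹ * η⁻¹ * ζ * η * ζ * η * ζ⁻¹ = η⁻¹ * x * η * ζ * η * ζ⁻¹ * η⁻¹ * x * ζ⁻¹ * η⁻¹ * ζ * η * ζ * η * ζ⁻¹ := by
    rw [show η⁻¹ * x * ζ⁻¹ * η * ζ * x * ζ⁻¹ * η⁻¹ * ζ * η * ζ * η * ζ⁻¹ = η⁻¹ * x * ζ⁻¹ * (η * ζ * η * ζ) * (ζ * η * ζ * η)⁻¹ * (η⁻¹ * x * ζ⁻¹)⁻¹ * (η⁻¹ * x * η * ζ * η * ζ⁻¹ * η⁻¹ * x * ζ⁻¹ * η⁻¹ * ζ * η * ζ * η * ζ⁻¹) from by group, ← hbr4]; group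
  have s6 : η⁻¹ * x * η * ζ * η * ζ⁻¹ * η⁻¹ * x * ζ⁻¹ * η⁻¹ * ζ * η * ζ * η * ζ⁻¹ = η⁻¹ * x * η * ζ * η * ζ⁻¹ * η⁻¹ * x * η := by
    rw [show η⁻¹ * x * η * ζ * η * ζ⁻¹ * η⁻¹ * x * ζ⁻¹ * η⁻¹ * ζ * η * ζ * η * ζ⁻¹ = η⁻¹ * x * η * ζ * η * ζ⁻¹ * η⁻¹ * x * ζ⁻¹ * η⁻¹ * (ζ * η * ζ * η) * (η * ζ * η * ζ)⁻¹ * (η⁻¹ * x * η * ζ * η * ζ⁻¹ * η⁻¹ * x * ζ⁻¹ * η⁻¹)⁻¹ * (η⁻¹ * x * η * ζ * η * ζ⁻¹ * η⁻¹ * x * η) from by group, hbr4]; group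
  calc (ζ * η * ζ⁻¹) * (η⁻¹ * x * η) * (ζ * η * ζ⁻¹)
      = ζ * η * ζ⁻¹ * η⁻¹ * x * η * ζ * η * ζ⁻¹ := by group
    _ = η⁻¹ * ζ⁻¹ * η * ζ * x * η * ζ * η * ζ⁻¹ := s0
    _ = η⁻¹ * ζ⁻¹ * x * η * x * η⁻¹ * x⁻¹ * ζ * x * η * ζ * η * ζ⁻¹ := s1
    _ = η⁻¹ * x * ζ⁻¹ * η * x * η⁻¹ * x⁻¹ * ζ * x * η * ζ * η * ζ⁻¹ := s2
    _ = η⁻¹ * x * ζ⁻¹ * η * ζ * x * ζ⁻¹ * η⁻¹ * x⁻¹ * ζ * x * η * ζ * η * ζ⁻¹ := s3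
    _ = η⁻¹ * x * ζ⁻¹ * η * ζ * x * ζ⁻¹ * η⁻¹ * ζ * η * ζ * η * ζ⁻¹ := s4
    _ = η⁻¹ * x * η * ζ * η * ζ⁻¹ * η⁻¹ * x * ζ⁻¹ * η⁻¹ * ζ * η * ζ * η * ζ⁻¹ := s5
    _ = η⁻¹ * x * η * ζ * η * ζ⁻¹ * η⁻¹ * x * η := s6
    _ = (η⁻¹ * x * η) * (ζ * η * ζ⁻¹) * (η⁻¹ * x * η) := by group
end
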